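/- For a separable bipartite density matrix σ on ℂ^{d_A} ⊗ ℂ^{d_B}, i.e. σ = Σ_i q_i σ_{A,i} ⊗ σ_{B,i} with q_i ≥ 0 summing to 1 and σ_{A,i}, σ_{B,i} density matrices, the coherent information I(A⟩B)_σ := S(σ_B) − S(σ) is nonpositive, where S is the von Neumann entropy and σ_B = Tr_A σ. -/

import Mathlib

open Matrix Kronecker
open scoped ComplexOrder

/-- Von Neumann entropy of a matrix: S(ρ) = −Σ λᵢ log λᵢ over the eigenvalues of ρ
(set to 0 if ρ is not Hermitian). -/
noncomputable def vN {n : Type*} [Fintype n] [DecidableEq n] (ρ : Matrix n n ℂ) : ℝ :=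
  if h : ρ.IsHermitian then ∑ i, Real.negMulLog (h.eigenvalues i) else 0

/-- Partial trace over the first factor. -/
noncomputable def ptrA {dA dB : ℕ}
    (σ : Matrix (Fin dA × Fin dB) (Fin dA × Fin dB) ℂ) : Matrix (Fin dB) (Fin dB) ℂ :=
  Matrix.of fun k l => ∑ i, σ (i, k) (i, l)

def rank1 {n : Type*} (w : n → ℂ) : Matrix n n ℂ := Matrix.of fun k l => w k * star (w l)

@[simp] lemma rank1_apply {n : Type*} (w : n → ℂ) (k l : n) :
    rank1 w k l = w k * star (w l) := rfl

lemma sum_rot {α β γ M : Type*} [Fintype α] [Fintype β] [Fintype γ] [AddCommMonoid M]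
    (f : α → β → γ → M) :
    ∑ a, ∑ b, ∑ c, f a b c = ∑ c, ∑ a, ∑ b, f a b c := by
  calc ∑ a, ∑ b, ∑ c, f a b c = ∑ a, ∑ c, ∑ b, f a b c :=
        Finset.sum_congr rfl fun a _ => Finset.sum_comm
    _ = ∑ c, ∑ a, ∑ b, f a b c := Finset.sum_comm

lemma jensen_aux {β : Type*} [Fintype β] (B μ : β → ℝ) (hB : ∀ b, 0 ≤ B b)
    (hs : ∑ b, B b ≤ 1) (hμ : ∀ b, 0 ≤ μ b) :
    ∑ b, B b * Real.negMulLog (μ b) ≤ Real.negMulLog (∑ b, B b * μ b) := by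
  have h := Real.concaveOn_negMulLog.le_map_sum (t := (Finset.univ : Finset (Option β)))
    (w := fun o => Option.elim o (1 - ∑ b, B b) B)
    (p := fun o => Option.elim o 0 μ) ?_ ?_ ?_
  · simpa [Fintype.sum_option, Real.negMulLog_zero, smul_eq_mul] using h
  · rintro (_|b) _
    · simpa using hs
    · exact hB b
  · simp [Fintype.sum_option]
  · rintro (_|b) _
    · exact Set.mem_Ici.2 le_rfl
    · exact hμ b

lemma key {n β : Type*} [Fintype n] [DecidableEq n] [Fintype β]
    (H : Matrix n n ℂ) (μ : β → ℝ) (w : β → n → ℂ)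
    (hμ : ∀ b, 0 ≤ μ b)
    (hH : ∀ k l, H k l = ∑ b, (μ b : ℂ) * (w b k * star (w b l)))
    (hle : ((1 : Matrix n n ℂ) - ∑ b, rank1 (w b)).PosSemidef) :
    ∑ b, (∑ k, Complex.normSq (w b k)) * Real.negMulLog (μ b) ≤ vN H := by
  classical
  have hherm : H.IsHermitian := by
    refine Matrix.ext fun k l => ?_
    rw [conjTranspose_apply, hH, hH, star_sum]
    refine Finset.sum_congr rfl fun b _ => ?_
    simp only [star_mul', star_star, Complex.star_def, Complex.conj_ofReal, Complex.conj_conj]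
    ring
  set U : Matrix n n ℂ := (hherm.eigenvectorUnitary : Matrix n n ℂ) with hU
  have hU1 : star U * U = 1 := Matrix.mem_unitaryGroup_iff'.mp hherm.eigenvectorUnitary.2
  have hU2 : U * star U = 1 := Matrix.mem_unitaryGroup_iff.mp hherm.eigenvectorUnitary.2
  set c : n → β → ℂ := fun a b => ∑ k, star (U k a) * w b k with hc
  set B : n → β → ℝ := fun a b => Complex.normSq (c a b) with hBdef
  have hstarc : ∀ a b, star (c a b) = ∑ l, star (w b l) * U l a := by
    intro a b
    rw [hc]; simp only; rw [star_sum]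
    refine Finset.sum_congr rfl fun l _ => ?_
    rw [star_mul', star_star]
    ring
  -- ∑_b μ_b * c * star c expansion
  have hexp : ∀ a, ∑ b, (μ b : ℂ) * (c a b * star (c a b))
      = ∑ b, ∑ k, ∑ l, (μ b : ℂ) * (star (U k a) * w b k) * (star (w b l) * U l a) := by
    intro a
    refine Finset.sum_congr rfl fun b _ => ?_
    rw [hstarc, hc]; simp only
    rw [Finset.sum_mul_sum, Finset.mul_sum]
    refine Finset.sum_congr rfl fun k _ => ?_
    rw [Finset.mul_sum]
    exact Finset.sum_congr rfl fun l _ => by ring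
  -- eigenvalue formula
  have heig : ∀ a, hherm.eigenvalues a = ∑ b, B a b * μ b := by
    intro a
    have hd : star (hherm.eigenvectorUnitary : Matrix n n ℂ) * H * (hherm.eigenvectorUnitary : Matrix n n ℂ)
        = Matrix.diagonal (RCLike.ofReal ∘ hherm.eigenvalues) := by
      simpa [Unitary.conjStarAlgAut_apply] using hherm.conjStarAlgAut_star_eigenvectorUnitary
    have hentry : ((star U * H) * U) a a
        = Matrix.diagonal (RCLike.ofReal ∘ hherm.eigenvalues) a a := by
      rw [hU, hd]
    have hLHS : ((star U * H) * U) a a = ∑ b, ((B a b * μ b : ℝ) : ℂ) := by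
      simp only [mul_apply, star_apply]
      calc ∑ l, (∑ k, star (U k a) * H k l) * U l a
          = ∑ l, ∑ k, ∑ b, (μ b : ℂ) * (star (U k a) * w b k) * (star (w b l) * U l a) := by
            refine Finset.sum_congr rfl fun l _ => ?_
            rw [Finset.sum_mul]
            refine Finset.sum_congr rfl fun k _ => ?_
            rw [hH, Finset.mul_sum, Finset.sum_mul]
            exact Finset.sum_congr rfl fun b _ => by ring
        _ = ∑ b, ∑ l, ∑ k, (μ b : ℂ) * (star (U k a) * w b k) * (star (w b l) * U l a) :=
            sum_rot _
        _ = ∑ b, (μ b : ℂ) * (c a b * star (c a b)) := by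
            rw [hexp a]
            exact Finset.sum_congr rfl fun b _ => Finset.sum_comm
        _ = ∑ b, ((B a b * μ b : ℝ) : ℂ) := by
            refine Finset.sum_congr rfl fun b _ => ?_
            rw [Complex.star_def, Complex.mul_conj, hBdef]
            push_cast
            ring
    rw [hLHS] at hentry
    have h2 : ((∑ b, B a b * μ b : ℝ) : ℂ) = ((hherm.eigenvalues a : ℝ) : ℂ) := by
      rw [Complex.ofReal_sum, hentry]
      simp [Matrix.diagonal_apply_eq]
    exact_mod_cast h2.symm
  -- unit columns of U
  have hUcol : ∀ a, (∑ k, (Complex.normSq (U k a) : ℂ)) = 1 := by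
    intro a
    have h1 : (star U * U) a a = 1 := by
      rw [hU1]
      simp [Matrix.one_apply]
    rw [← h1]
    simp only [mul_apply, star_apply]
    refine Finset.sum_congr rfl fun k _ => ?_
    rw [Complex.star_def, mul_comm, Complex.mul_conj]
  -- row bound
  have hrow : ∀ a, ∑ b, B a b ≤ 1 := by
    intro a
    have hps := hle.re_dotProduct_nonneg (fun k => U k a)
    have hP : (star fun k => U k a) ⬝ᵥ ((∑ b, rank1 (w b)) *ᵥ fun k => U k a)
        = ∑ b, (Complex.normSq (c a b) : ℂ) := by
      simp only [dotProduct, mulVec, Matrix.sum_apply, rank1_apply, Pi.star_apply]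
      calc ∑ k, star (U k a) * ∑ l, (∑ b, w b k * star (w b l)) * U l a
          = ∑ k, ∑ l, ∑ b, (star (U k a) * w b k) * (star (w b l) * U l a) := by
            refine Finset.sum_congr rfl fun k _ => ?_
            rw [Finset.mul_sum]
            refine Finset.sum_congr rfl fun l _ => ?_
            rw [Finset.sum_mul, Finset.mul_sum]
            exact Finset.sum_congr rfl fun b _ => by ring
        _ = ∑ b, ∑ k, ∑ l, (star (U k a) * w b k) * (star (w b l) * U l a) := sum_rot _
        _ = ∑ b, c a b * star (c a b) := by
            refine Finset.sum_congr rfl fun b _ => ?_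
            rw [hstarc, hc]; simp only
            rw [Finset.sum_mul_sum]
        _ = ∑ b, (Complex.normSq (c a b) : ℂ) := by
            refine Finset.sum_congr rfl fun b _ => ?_
            rw [Complex.star_def, Complex.mul_conj]
    have hz : (star fun k => U k a) ⬝ᵥ (fun k => U k a) = 1 := by
      rw [← hUcol a]
      simp only [dotProduct, Pi.star_apply]
      refine Finset.sum_congr rfl fun k _ => ?_
      rw [Complex.star_def, mul_comm, Complex.mul_conj]
    rw [sub_mulVec, dotProduct_sub, one_mulVec, hz, hP] at hps
    have h3 : ((1 : ℂ) - ∑ b, (Complex.normSq (c a b) : ℂ)) = ((1 - ∑ b, B a b : ℝ) : ℂ) := by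
      rw [hBdef]; push_cast; ring
    rw [h3, RCLike.re_to_complex, Complex.ofReal_re] at hps
    linarith
  -- column sums
  have hcol : ∀ b, ∑ a, B a b = ∑ k, Complex.normSq (w b k) := by
    intro b
    have hUU : ∀ l k : n, (∑ a, U l a * star (U k a)) = if l = k then 1 else 0 := by
      intro l k
      have h4 := congrFun (congrFun hU2 l) k
      simp only [mul_apply, star_apply, Matrix.one_apply] at h4
      exact h4
    have hcplx : (∑ a, (B a b : ℂ)) = ∑ k, (Complex.normSq (w b k) : ℂ) := by
      calc ∑ a, (B a b : ℂ)
          = ∑ a, c a b * star (c a b) := by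
            refine Finset.sum_congr rfl fun a _ => ?_
            rw [hBdef, Complex.star_def, Complex.mul_conj]
        _ = ∑ a, ∑ k, ∑ l, (star (U k a) * w b k) * (star (w b l) * U l a) := by
            refine Finset.sum_congr rfl fun a _ => ?_
            rw [hstarc, hc]; simp only
            rw [Finset.sum_mul_sum]
        _ = ∑ k, ∑ l, ∑ a, (star (U k a) * w b k) * (star (w b l) * U l a) := by
            rw [Finset.sum_comm]
            exact Finset.sum_congr rfl fun k _ => Finset.sum_comm
        _ = ∑ k, ∑ l, (w b k * star (w b l)) * ∑ a, U l a * star (U k a) := by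
            refine Finset.sum_congr rfl fun k _ => Finset.sum_congr rfl fun l _ => ?_
            rw [Finset.mul_sum]
            exact Finset.sum_congr rfl fun a _ => by ring
        _ = ∑ k, (Complex.normSq (w b k) : ℂ) := by
            refine Finset.sum_congr rfl fun k _ => ?_
            simp only [hUU, mul_ite, mul_one, mul_zero]
            rw [Finset.sum_ite_eq' Finset.univ k (fun l => w b k * star (w b l))]
            simp [Complex.star_def, Complex.mul_conj]
    exact_mod_cast hcplx
  -- final chain
  rw [vN, dif_pos hherm]
  calc ∑ b, (∑ k, Complex.normSq (w b k)) * Real.negMulLog (μ b)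
      = ∑ b, (∑ a, B a b) * Real.negMulLog (μ b) :=
        Finset.sum_congr rfl fun b _ => by rw [hcol]
    _ = ∑ b, ∑ a, B a b * Real.negMulLog (μ b) :=
        Finset.sum_congr rfl fun b _ => Finset.sum_mul _ _ _
    _ = ∑ a, ∑ b, B a b * Real.negMulLog (μ b) := Finset.sum_comm
    _ ≤ ∑ a, Real.negMulLog (∑ b, B a b * μ b) :=
        Finset.sum_le_sum fun a _ =>
          jensen_aux _ _ (fun b => Complex.normSq_nonneg _) (hrow a) hμ
    _ = ∑ a, Real.negMulLog (hherm.eigenvalues a) :=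
        Finset.sum_congr rfl fun a _ => by rw [heig]

lemma vN_CT_le {m n : Type*} [Fintype m] [Fintype n] [DecidableEq m] [DecidableEq n]
    (M : Matrix m n ℂ) : vN (Mᴴ * M) ≤ vN (M * Mᴴ) := by
  classical
  have h' : (Mᴴ * M).IsHermitian := isHermitian_conjTranspose_mul_self M
  set μ : n → ℝ := h'.eigenvalues with hμdef
  have hμ0 : ∀ b, 0 ≤ μ b := fun b => (posSemidef_conjTranspose_mul_self M).eigenvalues_nonneg b
  set y : n → n → ℂ := fun b => ⇑(h'.eigenvectorBasis b) with hy
  have heigvec : ∀ b, (Mᴴ * M) *ᵥ y b = (μ b : ℂ) • y b := by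
    intro b
    have h1 := h'.mulVec_eigenvectorBasis b
    rw [hy]; simp only
    rw [h1]
    ext k
    simp [Complex.real_smul, hμdef]
  have horth : ∀ b d, dotProduct (star (y b)) (y d) = if b = d then (1:ℂ) else 0 := by
    intro b d
    have h1 := orthonormal_iff_ite.mp h'.eigenvectorBasis.orthonormal b d
    rw [EuclideanSpace.inner_eq_star_dotProduct] at h1
    rw [dotProduct_comm]
    exact h1
  have hMy : ∀ b d, dotProduct (star (M *ᵥ y b)) (M *ᵥ y d) = if b = d then (μ d : ℂ) else 0 := by
    intro b d
    rw [star_mulVec, ← dotProduct_mulVec, mulVec_mulVec, heigvec d, dotProduct_smul,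
      horth, smul_eq_mul]
    by_cases h : b = d <;> simp [h]
  have hzero : ∀ b, μ b = 0 → M *ᵥ y b = 0 := by
    intro b h0
    have h1 := hMy b b
    rw [if_pos rfl, h0] at h1
    exact dotProduct_star_self_eq_zero.mp (by simpa using h1)
  set w : n → m → ℂ := fun b => if μ b = 0 then 0 else (((Real.sqrt (μ b))⁻¹ : ℝ) : ℂ) • (M *ᵥ y b)
    with hw
  have hsq : ∀ b, μ b ≠ 0 → (((Real.sqrt (μ b))⁻¹ : ℝ) : ℂ) * (((Real.sqrt (μ b))⁻¹ : ℝ) : ℂ)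
      * (μ b : ℂ) = 1 := by
    intro b h0
    have hs0 : Real.sqrt (μ b) ≠ 0 :=
      Real.sqrt_ne_zero'.mpr (lt_of_le_of_ne (hμ0 b) (Ne.symm h0))
    have : ((Real.sqrt (μ b))⁻¹ * (Real.sqrt (μ b))⁻¹ * μ b : ℝ) = 1 := by
      rw [show μ b = Real.sqrt (μ b) * Real.sqrt (μ b) from (Real.mul_self_sqrt (hμ0 b)).symm]
      field_simp
      rw [Real.sqrt_sq (Real.sqrt_nonneg _)]
    exact_mod_cast congrArg (fun r : ℝ => (r : ℂ)) this
  have hVV : ∀ K L : n, (∑ b, y b K * star (y b L)) = if K = L then 1 else 0 := by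
    intro K L
    have hU2 : (h'.eigenvectorUnitary : Matrix n n ℂ) * star (h'.eigenvectorUnitary : Matrix n n ℂ)
        = 1 := Matrix.mem_unitaryGroup_iff.mp h'.eigenvectorUnitary.2
    have h1 := congrFun (congrFun hU2 K) L
    simp only [mul_apply, star_apply, Matrix.one_apply,
      Matrix.IsHermitian.eigenvectorUnitary_apply] at h1
    exact h1
  have hMM : ∀ k l, (M * Mᴴ) k l = ∑ b, (M *ᵥ y b) k * star ((M *ᵥ y b) l) := by
    intro k l
    calc (M * Mᴴ) k l = ∑ K, M k K * star (M l K) := by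
          simp [mul_apply, conjTranspose_apply]
      _ = ∑ K, ∑ L, (M k K * star (M l L)) * (if K = L then 1 else 0) := by
          refine Finset.sum_congr rfl fun K _ => ?_
          simp [mul_ite, mul_one, mul_zero, Finset.sum_ite_eq]
      _ = ∑ K, ∑ L, (M k K * star (M l L)) * ∑ b, y b K * star (y b L) := by
          refine Finset.sum_congr rfl fun K _ => Finset.sum_congr rfl fun L _ => by rw [hVV]
      _ = ∑ K, ∑ L, ∑ b, (M k K * y b K) * star (M l L * y b L) := by
          refine Finset.sum_congr rfl fun K _ => Finset.sum_congr rfl fun L _ => ?_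
          rw [Finset.mul_sum]
          refine Finset.sum_congr rfl fun b _ => ?_
          rw [star_mul']
          ring
      _ = ∑ b, ∑ K, ∑ L, (M k K * y b K) * star (M l L * y b L) := sum_rot _
      _ = ∑ b, (M *ᵥ y b) k * star ((M *ᵥ y b) l) := by
          refine Finset.sum_congr rfl fun b _ => ?_
          simp only [mulVec, dotProduct]
          rw [star_sum, Finset.sum_mul_sum]
    -- done
  have hH : ∀ k l, (M * Mᴴ) k l = ∑ b, (μ b : ℂ) * (w b k * star (w b l)) := by
    intro k l
    rw [hMM k l]
    refine Finset.sum_congr rfl fun b _ => ?_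
    by_cases h0 : μ b = 0
    · rw [hw]; simp [h0, hzero b h0]
    · rw [hw]
      simp only [if_neg h0, Pi.smul_apply, smul_eq_mul, star_mul', Complex.star_def,
        Complex.conj_ofReal]
      set s : ℂ := (((Real.sqrt (μ b))⁻¹ : ℝ) : ℂ) with hs
      have h2 : s * s * (μ b : ℂ) = 1 := hsq b h0
      set vk := (M *ᵥ y b) k with hvk
      set cl := (starRingEnd ℂ) ((M *ᵥ y b) l) with hcl
      calc vk * cl = (s * s * (μ b : ℂ)) * (vk * cl) := by rw [h2, one_mul]
        _ = (μ b : ℂ) * (s * vk * (s * cl)) := by ring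
  have hww : ∀ b d, (∑ j, star (w b j) * w d j) = if b = d ∧ ¬ (μ b = 0) then 1 else 0 := by
    intro b d
    by_cases h0 : μ b = 0
    · rw [hw]; simp [h0]
    by_cases h1 : μ d = 0
    · rw [hw]
      simp only [if_pos h1, if_neg h0, Pi.zero_apply, mul_zero, Finset.sum_const_zero]
      rw [if_neg (fun h => by rcases h with ⟨rfl, hb⟩; exact hb h1)]
    · rw [hw]; simp only [if_neg h0, if_neg h1, Pi.smul_apply, smul_eq_mul]
      have hdot : (∑ j, star ((M *ᵥ y b) j) * (M *ᵥ y d) j) = if b = d then (μ d : ℂ) else 0 := by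
        have := hMy b d
        simpa [dotProduct] using this
      calc ∑ j, star ((((Real.sqrt (μ b))⁻¹ : ℝ) : ℂ) * (M *ᵥ y b) j)
            * ((((Real.sqrt (μ d))⁻¹ : ℝ) : ℂ) * (M *ᵥ y d) j)
          = (((Real.sqrt (μ b))⁻¹ : ℝ) : ℂ) * (((Real.sqrt (μ d))⁻¹ : ℝ) : ℂ)
            * ∑ j, star ((M *ᵥ y b) j) * (M *ᵥ y d) j := by
            rw [Finset.mul_sum]
            refine Finset.sum_congr rfl fun j _ => ?_
            rw [star_mul', Complex.star_def, Complex.conj_ofReal]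
            ring
        _ = if b = d ∧ ¬ (μ b = 0) then 1 else 0 := by
            rw [hdot]
            by_cases h : b = d
            · subst h
              rw [if_pos rfl, if_pos ⟨rfl, h0⟩]
              exact hsq b h0
            · rw [if_neg h, if_neg (fun hc => h hc.1), mul_zero]
  set P : Matrix m m ℂ := ∑ b, rank1 (w b) with hPdef
  have hPapp : ∀ k l, P k l = ∑ b, w b k * star (w b l) := by
    intro k l
    rw [hPdef, Matrix.sum_apply]
    rfl
  have hPherm : Pᴴ = P := by
    refine Matrix.ext fun k l => ?_
    rw [conjTranspose_apply, hPapp, hPapp, star_sum]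
    refine Finset.sum_congr rfl fun b _ => ?_
    rw [star_mul', star_star]
    exact mul_comm _ _
  have hPP : P * P = P := by
    refine Matrix.ext fun k l => ?_
    rw [mul_apply]
    calc ∑ j, P k j * P j l
        = ∑ j, ∑ b, ∑ d, (w b k * star (w b j)) * (w d j * star (w d l)) := by
          refine Finset.sum_congr rfl fun j _ => ?_
          rw [hPapp, hPapp, Finset.sum_mul_sum]
      _ = ∑ d, ∑ j, ∑ b, (w b k * star (w b j)) * (w d j * star (w d l)) := sum_rot _
      _ = ∑ d, ∑ b, ∑ j, (w b k * star (w b j)) * (w d j * star (w d l)) :=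
          Finset.sum_congr rfl fun d _ => Finset.sum_comm
      _ = ∑ d, ∑ b, (w b k * star (w d l)) * ∑ j, star (w b j) * w d j := by
          refine Finset.sum_congr rfl fun d _ => Finset.sum_congr rfl fun b _ => ?_
          rw [Finset.mul_sum]
          exact Finset.sum_congr rfl fun j _ => by ring
      _ = ∑ d, ∑ b, (w b k * star (w d l)) * (if b = d ∧ ¬ (μ b = 0) then 1 else 0) := by
          refine Finset.sum_congr rfl fun d _ => Finset.sum_congr rfl fun b _ => by rw [hww]
      _ = P k l := by
          rw [hPapp]
          refine Finset.sum_congr rfl fun d _ => ?_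
          by_cases hd : μ d = 0
          · have hwd : w d = (0 : m → ℂ) := by rw [hw]; simp [hd]
            simp [hwd]
          · calc ∑ b, (w b k * star (w d l)) * (if b = d ∧ ¬ (μ b = 0) then 1 else 0)
                = ∑ b, if b = d then w b k * star (w d l) else 0 := by
                  refine Finset.sum_congr rfl fun b _ => ?_
                  by_cases hb : b = d
                  · subst hb
                    rw [if_pos ⟨rfl, hd⟩, if_pos rfl, mul_one]
                  · rw [if_neg (fun h => hb h.1), if_neg hb, mul_zero]
              _ = w d k * star (w d l) := by
                  rw [Finset.sum_ite_eq' Finset.univ d (fun b => w b k * star (w d l))]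
                  simp
  have hle : ((1 : Matrix m m ℂ) - P).PosSemidef := by
    have h5 : (1 : Matrix m m ℂ) - P = ((1 : Matrix m m ℂ) - P)ᴴ * ((1 : Matrix m m ℂ) - P) := by
      rw [conjTranspose_sub, conjTranspose_one, hPherm, mul_sub, mul_one, sub_mul, one_mul, hPP]
      abel
    rw [h5]
    exact posSemidef_conjTranspose_mul_self _
  have hnorm : ∀ b, (∑ k, Complex.normSq (w b k)) = if μ b = 0 then 0 else 1 := by
    intro b
    have h6 := hww b b
    have h7 : (∑ j, (Complex.normSq (w b j) : ℂ)) = if b = b ∧ ¬ (μ b = 0) then 1 else 0 := by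
      rw [← h6]
      refine Finset.sum_congr rfl fun j _ => ?_
      rw [Complex.star_def, Complex.normSq_eq_conj_mul_self]
    by_cases h0 : μ b = 0
    · rw [if_pos h0]
      have : (∑ j, (Complex.normSq (w b j) : ℂ)) = 0 := by rw [h7]; simp [h0]
      exact_mod_cast this
    · rw [if_neg h0]
      have : (∑ j, (Complex.normSq (w b j) : ℂ)) = 1 := by rw [h7]; simp [h0]
      exact_mod_cast this
  have hk := key (M * Mᴴ) μ w hμ0 hH (by rw [← hPdef]; exact hle)
  rw [vN, dif_pos h']
  calc ∑ i, Real.negMulLog (h'.eigenvalues i)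
      = ∑ b, (∑ k, Complex.normSq (w b k)) * Real.negMulLog (μ b) := by
        refine Finset.sum_congr rfl fun b _ => ?_
        by_cases h0 : μ b = 0
        · rw [hnorm b, if_pos h0]
          show Real.negMulLog (μ b) = _
          rw [h0, Real.negMulLog_zero, zero_mul]
        · rw [hnorm b, if_neg h0, one_mul]
    _ ≤ vN (M * Mᴴ) := hk

lemma vN_gram {m n : Type*} [Fintype m] [Fintype n] [DecidableEq m] [DecidableEq n]
    (M : Matrix m n ℂ) : vN (M * Mᴴ) = vN (Mᴴ * M) := by
  have h1 := vN_CT_le M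
  have h2 := vN_CT_le Mᴴ
  rw [conjTranspose_conjTranspose] at h2
  exact le_antisymm h2 h1

lemma spectral_apply {n : Type*} [Fintype n] [DecidableEq n] {ρ : Matrix n n ℂ}
    (h : ρ.IsHermitian) (x y : n) :
    ρ x y = ∑ a, ((h.eigenvalues a : ℝ) : ℂ) *
      ((h.eigenvectorUnitary : Matrix n n ℂ) x a
        * star ((h.eigenvectorUnitary : Matrix n n ℂ) y a)) := by
  conv_lhs => rw [h.spectral_theorem]
  rw [Unitary.conjStarAlgAut_apply, mul_apply]
  refine Finset.sum_congr rfl fun a _ => ?_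
  rw [Matrix.mul_diagonal, Matrix.star_apply]
  have : (RCLike.ofReal ∘ h.eigenvalues) a = ((h.eigenvalues a : ℝ) : ℂ) := rfl
  rw [this]
  ring

lemma col_norm {n : Type*} [Fintype n] [DecidableEq n] {U : Matrix n n ℂ}
    (h : star U * U = 1) (a : n) : ∑ x, Complex.normSq (U x a) = 1 := by
  have h1 : (star U * U) a a = 1 := by rw [h]; simp [Matrix.one_apply]
  have h2 : (∑ x, (Complex.normSq (U x a) : ℂ)) = 1 := by
    rw [← h1]
    simp only [mul_apply, star_apply]
    refine Finset.sum_congr rfl fun x _ => ?_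
    rw [Complex.star_def, mul_comm, Complex.mul_conj]
  exact_mod_cast h2

lemma col_sum_one {n : Type*} [Fintype n] [DecidableEq n] {U : Matrix n n ℂ}
    (h : star U * U = 1) (a : n) : (∑ x, star (U x a) * U x a) = (1 : ℂ) := by
  have h1 : (∑ x, star (U x a) * U x a) = ∑ x, (Complex.normSq (U x a) : ℂ) :=
    Finset.sum_congr rfl fun x _ => by rw [Complex.star_def, mul_comm, Complex.mul_conj]
  rw [h1]
  exact_mod_cast col_norm h a

/-- For a separable bipartite density matrix σ = Σᵢ qᵢ σ_{A,i} ⊗ σ_{B,i}, the coherent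
information I(A⟩B) = S(σ_B) − S(σ) is nonpositive. -/
theorem stmt15 {dA dB : ℕ} {ι : Type} [Fintype ι]
    (q : ι → ℝ) (hq : ∀ i, 0 ≤ q i) (hqs : ∑ i, q i = 1)
    (σA : ι → Matrix (Fin dA) (Fin dA) ℂ)
    (σB : ι → Matrix (Fin dB) (Fin dB) ℂ)
    (hA : ∀ i, (σA i).PosSemidef ∧ (σA i).trace = 1)
    (hB : ∀ i, (σB i).PosSemidef ∧ (σB i).trace = 1)
    (σ : Matrix (Fin dA × Fin dB) (Fin dA × Fin dB) ℂ)
    (hσ : σ = ∑ i, (q i : ℂ) • (σA i ⊗ₖ σB i)) :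
    vN (ptrA σ) - vN σ ≤ 0 := by
  classical
  have hAh : ∀ i, (σA i).IsHermitian := fun i => (hA i).1.1
  have hBh : ∀ i, (σB i).IsHermitian := fun i => (hB i).1.1
  set UA : ι → Matrix (Fin dA) (Fin dA) ℂ :=
    fun i => ((hAh i).eigenvectorUnitary : Matrix (Fin dA) (Fin dA) ℂ) with hUA
  set UB : ι → Matrix (Fin dB) (Fin dB) ℂ :=
    fun i => ((hBh i).eigenvectorUnitary : Matrix (Fin dB) (Fin dB) ℂ) with hUB
  set lA : ι → Fin dA → ℝ := fun i => (hAh i).eigenvalues with hlA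
  set lB : ι → Fin dB → ℝ := fun i => (hBh i).eigenvalues with hlB
  have hlA0 : ∀ i a, 0 ≤ lA i a := fun i a => (hA i).1.eigenvalues_nonneg a
  have hlB0 : ∀ i b, 0 ≤ lB i b := fun i b => (hB i).1.eigenvalues_nonneg b
  have hUA1 : ∀ i, star (UA i) * UA i = 1 :=
    fun i => Matrix.mem_unitaryGroup_iff'.mp (hAh i).eigenvectorUnitary.2
  have hUB1 : ∀ i, star (UB i) * UB i = 1 :=
    fun i => Matrix.mem_unitaryGroup_iff'.mp (hBh i).eigenvectorUnitary.2
  have hcolA : ∀ i a, (∑ x, star (UA i x a) * UA i x a) = (1 : ℂ) :=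
    fun i a => col_sum_one (hUA1 i) a
  -- weights
  set p : ι × Fin dA × Fin dB → ℝ := fun k => q k.1 * (lA k.1 k.2.1 * lB k.1 k.2.2) with hp
  have hp0 : ∀ k, 0 ≤ p k := fun k => mul_nonneg (hq _) (mul_nonneg (hlA0 _ _) (hlB0 _ _))
  set s : ι × Fin dA × Fin dB → ℝ := fun k => Real.sqrt (p k) with hs
  have hss : ∀ k, (s k : ℂ) * (s k : ℂ) = ((p k : ℝ) : ℂ) := by
    intro k
    have : s k * s k = p k := Real.mul_self_sqrt (hp0 k)
    exact_mod_cast congrArg (fun r : ℝ => (r : ℂ)) this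
  set M : Matrix (Fin dA × Fin dB) (ι × Fin dA × Fin dB) ℂ :=
    Matrix.of fun z k => (s k : ℂ) * (UA k.1 z.1 k.2.1 * UB k.1 z.2 k.2.2) with hM
  set N : Matrix (Fin dB) (ι × Fin dA × Fin dB) ℂ :=
    Matrix.of fun z k => (s k : ℂ) * UB k.1 z k.2.2 with hN
  -- σ = M Mᴴ
  have hσM : σ = M * Mᴴ := by
    refine Matrix.ext fun z z' => ?_
    obtain ⟨x, yy⟩ := z
    obtain ⟨x', y'⟩ := z'
    rw [hσ]
    rw [Matrix.sum_apply]
    simp only [Matrix.smul_apply, Matrix.kroneckerMap_apply, smul_eq_mul]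
    rw [mul_apply]
    rw [Fintype.sum_prod_type]
    refine Finset.sum_congr rfl fun i _ => ?_
    rw [spectral_apply (hAh i) x x', spectral_apply (hBh i) yy y']
    rw [Finset.sum_mul_sum, Finset.mul_sum, Fintype.sum_prod_type]
    refine Finset.sum_congr rfl fun a _ => ?_
    rw [Finset.mul_sum]
    refine Finset.sum_congr rfl fun b _ => ?_
    rw [hM]
    simp only [Matrix.of_apply, conjTranspose_apply, Matrix.star_apply]
    simp only [star_mul', Complex.star_def, Complex.conj_ofReal]
    have hps : ((s (i,a,b) : ℝ) : ℂ) * ((s (i,a,b) : ℝ) : ℂ) = ((q i : ℝ):ℂ) * (((lA i a : ℝ):ℂ) * ((lB i b : ℝ):ℂ)) := by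
      rw [hss (i,a,b), hp]
      push_cast
      ring
    calc (q i : ℂ) * (((lA i a : ℝ):ℂ) * (UA i x a * star (UA i x' a))
            * (((lB i b : ℝ):ℂ) * (UB i yy b * star (UB i y' b))))
        = ((q i : ℝ):ℂ) * (((lA i a : ℝ):ℂ) * ((lB i b : ℝ):ℂ))
            * (UA i x a * star (UA i x' a) * (UB i yy b * star (UB i y' b))) := by
          push_cast; ring
      _ = (s (i,a,b) : ℂ) * (UA i x a * UB i yy b)
            * ((s (i,a,b) : ℂ) * ((starRingEnd ℂ) (UA i x' a) * (starRingEnd ℂ) (UB i y' b))) := by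
          rw [← hps]
          simp only [Complex.star_def]
          ring
  -- ptrA σ = N Nᴴ
  have hptr : ptrA σ = N * Nᴴ := by
    refine Matrix.ext fun k l => ?_
    show (∑ x, σ (x, k) (x, l)) = (N * Nᴴ) k l
    rw [hσM]
    simp only [mul_apply, conjTranspose_apply, Matrix.star_apply]
    rw [Finset.sum_comm]
    refine Finset.sum_congr rfl fun K _ => ?_
    obtain ⟨i, a, b⟩ := K
    rw [hM, hN]
    simp only [Matrix.of_apply, star_mul', Complex.star_def, Complex.conj_ofReal]
    calc ∑ x, (s (i,a,b) : ℂ) * (UA i x a * UB i k b)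
            * ((s (i,a,b):ℂ) * ((starRingEnd ℂ) (UA i x a) * (starRingEnd ℂ) (UB i l b)))
        = ((s (i,a,b):ℂ) * UB i k b * ((s (i,a,b):ℂ) * (starRingEnd ℂ) (UB i l b)))
            * ∑ x, star (UA i x a) * UA i x a := by
          rw [Finset.mul_sum]
          refine Finset.sum_congr rfl fun x _ => ?_
          rw [Complex.star_def]
          ring
      _ = (s (i,a,b):ℂ) * UB i k b * ((s (i,a,b):ℂ) * (starRingEnd ℂ) (UB i l b)) := by
          rw [hcolA i a, mul_one]
  -- core inequality
  have h' : (Nᴴ * N).IsHermitian := isHermitian_conjTranspose_mul_self N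
  set μ : ι × Fin dA × Fin dB → ℝ := h'.eigenvalues with hμdef
  have hμ0 : ∀ b, 0 ≤ μ b := fun b => (posSemidef_conjTranspose_mul_self N).eigenvalues_nonneg b
  set V : Matrix (ι × Fin dA × Fin dB) (ι × Fin dA × Fin dB) ℂ :=
    (↑(h'.eigenvectorUnitary) : Matrix (ι × Fin dA × Fin dB) (ι × Fin dA × Fin dB) ℂ) with hV
  have hV1 : star V * V = 1 := Matrix.mem_unitaryGroup_iff'.mp h'.eigenvectorUnitary.2
  have hV2 : V * star V = 1 := Matrix.mem_unitaryGroup_iff.mp h'.eigenvectorUnitary.2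
  have hVV : ∀ K L, (∑ b, V K b * star (V L b)) = if K = L then (1:ℂ) else 0 := by
    intro K L
    have h1 := congrFun (congrFun hV2 K) L
    simp only [mul_apply, Matrix.star_apply, Matrix.one_apply] at h1
    exact h1
  -- the u-vectors
  set uu : (ι × Fin dA × Fin dB) → Fin dA → ℂ := fun L x => UA L.1 x L.2.1 with huu
  have hufac : ∀ K L : ι × Fin dA × Fin dB, (Mᴴ * M) K L
      = (∑ x, star (uu K x) * uu L x) * (Nᴴ * N) K L := by
    intro K L
    simp only [mul_apply, conjTranspose_apply, Matrix.star_apply]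
    rw [Fintype.sum_prod_type]
    rw [Finset.sum_mul_sum]
    refine Finset.sum_congr rfl fun x _ => ?_
    refine Finset.sum_congr rfl fun yv _ => ?_
    obtain ⟨iK, aK, bK⟩ := K
    obtain ⟨iL, aL, bL⟩ := L
    rw [hM, hN, huu]
    simp only [Matrix.of_apply, star_mul', Complex.star_def, Complex.conj_ofReal]
    ring
  set w : (Fin dA × (ι × Fin dA × Fin dB)) → (ι × Fin dA × Fin dB) → ℂ :=
    fun xb L => star (uu L xb.1) * V L xb.2 with hwdef
  have hH2 : ∀ K L, (Mᴴ * M) K L = ∑ xb, ((μ xb.2 : ℝ) : ℂ) * (w xb K * star (w xb L)) := by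
    intro K L
    rw [hufac K L, spectral_apply h' K L, Finset.sum_mul_sum]
    conv_rhs => rw [Fintype.sum_prod_type]
    refine Finset.sum_congr rfl fun x _ => ?_
    refine Finset.sum_congr rfl fun b _ => ?_
    rw [hwdef, hV]
    simp only [star_mul', Complex.star_def, Complex.conj_conj]
    ring
  have hPone : (∑ xb : Fin dA × (ι × Fin dA × Fin dB), rank1 (w xb))
      = (1 : Matrix (ι × Fin dA × Fin dB) (ι × Fin dA × Fin dB) ℂ) := by
    refine Matrix.ext fun K L => ?_
    rw [Matrix.sum_apply]
    simp only [rank1_apply]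
    calc ∑ xb : Fin dA × (ι × Fin dA × Fin dB), w xb K * star (w xb L)
        = (∑ x, star (uu K x) * uu L x) * (∑ b, V K b * star (V L b)) := by
          rw [Fintype.sum_prod_type, Finset.sum_mul_sum]
          refine Finset.sum_congr rfl fun x _ => ?_
          refine Finset.sum_congr rfl fun b _ => ?_
          rw [hwdef]
          simp only [star_mul', Complex.star_def, Complex.conj_conj]
          ring
      _ = (1 : Matrix (ι × Fin dA × Fin dB) (ι × Fin dA × Fin dB) ℂ) K L := by
          rw [hVV]
          by_cases h : K = L
          · subst h
            rw [if_pos rfl, mul_one, Matrix.one_apply_eq]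
            obtain ⟨i, a, b⟩ := K
            exact hcolA i a
          · rw [if_neg h, mul_zero, Matrix.one_apply_ne h]
  have hle2 : ((1 : Matrix (ι × Fin dA × Fin dB) (ι × Fin dA × Fin dB) ℂ)
      - ∑ xb : Fin dA × (ι × Fin dA × Fin dB), rank1 (w xb)).PosSemidef := by
    rw [hPone, sub_self]
    exact ⟨Matrix.isHermitian_zero, fun x => by simp⟩
  have hk := key (Mᴴ * M) (fun xb => μ xb.2) w (fun xb => hμ0 _) hH2 hle2
  -- LHS of hk equals vN (Nᴴ N)
  have hwnorm : (∑ xb : Fin dA × (ι × Fin dA × Fin dB),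
      (∑ K, Complex.normSq (w xb K)) * Real.negMulLog (μ xb.2))
      = ∑ b, Real.negMulLog (μ b) := by
    rw [Fintype.sum_prod_type]
    rw [Finset.sum_comm]
    refine Finset.sum_congr rfl fun b _ => ?_
    have hcolV : ∑ K, Complex.normSq (V K b) = 1 := col_norm hV1 b
    calc ∑ x, (∑ K, Complex.normSq (w (x, b) K)) * Real.negMulLog (μ b)
        = (∑ x, ∑ K, Complex.normSq (w (x, b) K)) * Real.negMulLog (μ b) := by
          rw [Finset.sum_mul]
      _ = Real.negMulLog (μ b) := by
          rw [show (∑ x, ∑ K, Complex.normSq (w (x, b) K)) = 1 from ?_, one_mul]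
          calc ∑ x, ∑ K, Complex.normSq (w (x, b) K)
              = ∑ K, Complex.normSq (V K b) * ∑ x, Complex.normSq (uu K x) := by
                rw [Finset.sum_comm]
                refine Finset.sum_congr rfl fun K _ => ?_
                rw [Finset.mul_sum]
                refine Finset.sum_congr rfl fun x _ => ?_
                rw [hwdef]
                simp only [Complex.normSq_mul, Complex.star_def, Complex.normSq_conj]
                ring
            _ = ∑ K, Complex.normSq (V K b) := by
                refine Finset.sum_congr rfl fun K _ => ?_
                obtain ⟨i, a, bb⟩ := K
                rw [show (∑ x, Complex.normSq (uu (i,a,bb) x)) = 1 from ?_, mul_one]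
                have := col_norm (hUA1 i) a
                simpa [huu] using this
            _ = 1 := hcolV
  have hcore : vN (Nᴴ * N) ≤ vN (Mᴴ * M) := by
    have e : vN (Nᴴ * N) = ∑ b, Real.negMulLog (μ b) := by
      rw [vN, dif_pos h']
    rw [e, ← hwnorm]
    exact hk
  have e1 : vN σ = vN (Mᴴ * M) := by rw [hσM, vN_gram]
  have e2 : vN (ptrA σ) = vN (Nᴴ * N) := by rw [hptr, vN_gram]
  rw [e1, e2]
  linarith
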